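/- Every nontrivial element A of SL(2,C) has at least one and at most two square roots in SL(2,C) up to sign; moreover, if the image of A in the restricted Lorentz group satisfies μ^2 = 1 with μ ≠ 1, then μ has exactly two square roots ν₊, ν₋ in the restricted Lorentz group, and ν₊ν₋ = 1. -/

import Mathlib

/-- The group `SL(2,ℂ)`. -/
abbrev SL2C := Matrix.SpecialLinearGroup (Fin 2) ℂ

/-- The restricted Lorentz group, realized as `SL(2,ℂ)/{±1} = PSL(2,ℂ)`, the image of
`SL(2,ℂ)` under the standard 2-to-1 covering homomorphism with kernel `{±1}` (the center). -/
abbrev L1 := SL2C ⧸ Subgroup.center SL2C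

/-- The covering homomorphism `Λ : SL(2,ℂ) → L₁`. -/
abbrev Λ : SL2C →* L1 := QuotientGroup.mk' (Subgroup.center SL2C)

open Matrix in
section
instance : Fact (Even (Fintype.card (Fin 2))) := ⟨by simp⟩

namespace SqrtAux

lemma ch2 (N : Matrix (Fin 2) (Fin 2) ℂ) :
    N * N = N.trace • N - N.det • (1 : Matrix (Fin 2) (Fin 2) ℂ) := by
  ext i j
  fin_cases i <;> fin_cases j <;>
    simp [Matrix.mul_apply, Fin.sum_univ_two, Matrix.trace_fin_two, Matrix.det_fin_two,
      Matrix.one_apply] <;> try ring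

lemma det_add_one (A : Matrix (Fin 2) (Fin 2) ℂ) : (A + 1).det = A.det + A.trace + 1 := by
  simp [Matrix.det_fin_two, Matrix.trace_fin_two]; try ring

lemma trace_add_one (A : Matrix (Fin 2) (Fin 2) ℂ) : (A + 1).trace = A.trace + 2 := by
  simp [Matrix.trace_fin_two]; try ring

lemma sl_ch (N : SL2C) : (N : Matrix (Fin 2) (Fin 2) ℂ) * N
    = (N : Matrix (Fin 2) (Fin 2) ℂ).trace • (N : Matrix (Fin 2) (Fin 2) ℂ) - 1 := by
  have := ch2 (N : Matrix (Fin 2) (Fin 2) ℂ)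
  rwa [N.det_coe, one_smul] at this

lemma exists_sqrt (A : SL2C) (h : (A : Matrix (Fin 2) (Fin 2) ℂ).trace ≠ -2) :
    ∃ N : SL2C, N ^ 2 = A := by
  obtain ⟨t, ht⟩ := IsAlgClosed.exists_pow_nat_eq ((A : Matrix (Fin 2) (Fin 2) ℂ).trace + 2)
    (n := 2) (by norm_num)
  have htne : t ≠ 0 := by
    intro h0; rw [h0] at ht
    apply h; linear_combination -ht
  have hdet : (t⁻¹ • ((A : Matrix (Fin 2) (Fin 2) ℂ) + 1)).det = 1 := by
    rw [Matrix.det_smul, det_add_one, A.det_coe, Fintype.card_fin]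
    field_simp
    linear_combination -ht
  refine ⟨⟨_, hdet⟩, ?_⟩
  apply Subtype.ext
  erw [pow_two]
  show (t⁻¹ • ((A : Matrix (Fin 2) (Fin 2) ℂ) + 1)) * (t⁻¹ • ((A : Matrix (Fin 2) (Fin 2) ℂ) + 1))
    = (A : Matrix (Fin 2) (Fin 2) ℂ)
  have hsq : ((A : Matrix (Fin 2) (Fin 2) ℂ) + 1) * ((A : Matrix (Fin 2) (Fin 2) ℂ) + 1)
      = (t ^ 2) • (A : Matrix (Fin 2) (Fin 2) ℂ) := by
    have hch := sl_ch A
    have expand : ((A : Matrix (Fin 2) (Fin 2) ℂ) + 1) * ((A : Matrix (Fin 2) (Fin 2) ℂ) + 1)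
        = (A : Matrix (Fin 2) (Fin 2) ℂ) * A + A + A + 1 := by noncomm_ring
    rw [expand, hch, ht]
    module
  rw [smul_mul_smul_comm, hsq, smul_smul]
  have h1 : t⁻¹ * t⁻¹ * t ^ 2 = 1 := by rw [pow_two]; field_simp
  rw [h1, one_smul]

lemma sqrt_repr (A N : SL2C) (h : (A : Matrix (Fin 2) (Fin 2) ℂ).trace ≠ -2)
    (hN : N ^ 2 = A) :
    ∃ t : ℂ, t ^ 2 = (A : Matrix (Fin 2) (Fin 2) ℂ).trace + 2 ∧ t ≠ 0 ∧
      (N : Matrix (Fin 2) (Fin 2) ℂ)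
        = t⁻¹ • ((A : Matrix (Fin 2) (Fin 2) ℂ) + 1) := by
  set t := (N : Matrix (Fin 2) (Fin 2) ℂ).trace with hts
  have hch := sl_ch N
  have hNA : (N : Matrix (Fin 2) (Fin 2) ℂ) * N = (A : Matrix (Fin 2) (Fin 2) ℂ) := by
    rw [← Matrix.SpecialLinearGroup.coe_mul, ← pow_two, hN]
  have key : t • (N : Matrix (Fin 2) (Fin 2) ℂ) = (A : Matrix (Fin 2) (Fin 2) ℂ) + 1 := by
    rw [← hNA, hch]; module
  have htr : t * t = (A : Matrix (Fin 2) (Fin 2) ℂ).trace + 2 := by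
    have := congrArg Matrix.trace key
    rwa [Matrix.trace_smul, trace_add_one, smul_eq_mul] at this
  have htne : t ≠ 0 := by
    intro h0; rw [h0, zero_mul] at htr; apply h; linear_combination -htr
  refine ⟨t, by rw [sq]; exact htr, htne, ?_⟩
  rw [← key, smul_smul, inv_mul_cancel₀ htne, one_smul]

lemma sqrt_unique (A N M : SL2C) (h : (A : Matrix (Fin 2) (Fin 2) ℂ).trace ≠ -2)
    (hN : N ^ 2 = A) (hM : M ^ 2 = A) : M = N ∨ M = -N := by
  obtain ⟨t, ht, htne, hrep⟩ := sqrt_repr A N h hN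
  obtain ⟨s, hs, hsne, hrep'⟩ := sqrt_repr A M h hM
  have hst : s = t ∨ s = -t := by
    have h1 : (s - t) * (s + t) = 0 := by linear_combination hs - ht
    rcases mul_eq_zero.mp h1 with h2 | h2
    · left; linear_combination h2
    · right; linear_combination h2
  rcases hst with rfl | rfl
  · left; apply Subtype.ext; rw [hrep', hrep]
  · right; apply Subtype.ext
    rw [Matrix.SpecialLinearGroup.coe_neg, hrep', hrep]
    rw [← neg_inv, neg_smul]

lemma no_sqrt (A N : SL2C) (h : (A : Matrix (Fin 2) (Fin 2) ℂ).trace = -2)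
    (hA : A ≠ -1) (hN : N ^ 2 = A) : False := by
  set t := (N : Matrix (Fin 2) (Fin 2) ℂ).trace with hts
  have hch := sl_ch N
  have hNA : (N : Matrix (Fin 2) (Fin 2) ℂ) * N = (A : Matrix (Fin 2) (Fin 2) ℂ) := by
    rw [← Matrix.SpecialLinearGroup.coe_mul, ← pow_two, hN]
  have key : t • (N : Matrix (Fin 2) (Fin 2) ℂ) = (A : Matrix (Fin 2) (Fin 2) ℂ) + 1 := by
    rw [← hNA, hch]; module
  have htr : t * t = (A : Matrix (Fin 2) (Fin 2) ℂ).trace + 2 := by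
    have := congrArg Matrix.trace key
    rwa [Matrix.trace_smul, trace_add_one, smul_eq_mul] at this
  rw [h] at htr
  have ht0 : t = 0 := mul_self_eq_zero.mp (by linear_combination htr)
  rw [ht0, zero_smul] at key
  apply hA
  apply Subtype.ext
  rw [Matrix.SpecialLinearGroup.coe_neg, Matrix.SpecialLinearGroup.coe_one]
  exact eq_neg_of_add_eq_zero_left key.symm

lemma mem_center_iff' (Z : SL2C) : Z ∈ Subgroup.center SL2C ↔ Z = 1 ∨ Z = -1 := by
  constructor
  · intro h
    obtain ⟨r, hr, hr'⟩ := Matrix.SpecialLinearGroup.mem_center_iff.mp h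
    simp only [Fintype.card_fin] at hr
    have h2 : r = 1 ∨ r = -1 := by
      rw [sq] at hr; exact mul_self_eq_one_iff.mp hr
    rcases h2 with rfl | rfl
    · left; apply Subtype.ext; rw [← hr']; simp
    · right; apply Subtype.ext; rw [← hr']
      ext i j; simp [Matrix.one_apply, Matrix.diagonal]; split <;> simp_all
  · rintro (rfl | rfl) <;> exact Subgroup.mem_center_iff.mpr fun g => by simp [mul_comm]

lemma lam_eq_iff (N M : SL2C) : Λ N = Λ M ↔ N = M ∨ N = -M := by
  rw [QuotientGroup.mk'_eq_mk']
  constructor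
  · rintro ⟨z, hz, rfl⟩
    rcases (mem_center_iff' z).mp hz with rfl | rfl
    · left; simp
    · right; simp
  · rintro (rfl | rfl)
    · exact ⟨1, (mem_center_iff' 1).mpr (Or.inl rfl), mul_one _⟩
    · exact ⟨-1, (mem_center_iff' (-1)).mpr (Or.inr rfl), by simp⟩

lemma lam_neg (N : SL2C) : Λ (-N) = Λ N := (lam_eq_iff _ _).mpr (Or.inr rfl)

lemma lam_eq_one_iff (N : SL2C) : Λ N = 1 ↔ N = 1 ∨ N = -1 := by
  have h := lam_eq_iff N 1
  rw [_root_.map_one] at h; exact h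

lemma root_lam_unique (B : SL2C) (hB : B ≠ -1) (N M : SL2C)
    (hN : N ^ 2 = B) (hM : M ^ 2 = B) : Λ N = Λ M := by
  by_cases htr : (B : Matrix (Fin 2) (Fin 2) ℂ).trace = -2
  · exact (no_sqrt B N htr hB hN).elim
  · rcases sqrt_unique B N M htr hN hM with h | h
    · rw [h]
    · rw [h, lam_neg]

lemma root_classify (A : SL2C) (ν : L1) (h : ν ^ 2 = Λ A) :
    (∃ N : SL2C, Λ N = ν ∧ N ^ 2 = A) ∨ (∃ N : SL2C, Λ N = ν ∧ N ^ 2 = -A) := by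
  obtain ⟨N, hN⟩ := QuotientGroup.mk'_surjective (Subgroup.center SL2C) ν
  have hN' : Λ N = ν := hN
  have : Λ (N ^ 2) = Λ A := by rw [map_pow, hN']; exact h
  rcases (lam_eq_iff _ _).mp this with h1 | h1
  · exact Or.inl ⟨N, hN', h1⟩
  · exact Or.inr ⟨N, hN', h1⟩

lemma A_ne_zero (A : SL2C) : (A : Matrix (Fin 2) (Fin 2) ℂ) ≠ 0 := by
  intro h
  have := A.det_coe
  rw [h] at this
  simp at this

lemma ne_neg_self (A : SL2C) : A ≠ -A := by
  intro h
  have hc : (A : Matrix (Fin 2) (Fin 2) ℂ) = -(A : Matrix (Fin 2) (Fin 2) ℂ) := by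
    rw [← Matrix.SpecialLinearGroup.coe_neg]
    exact Subtype.ext_iff.mp h
  have h2A : (2:ℂ) • (A : Matrix (Fin 2) (Fin 2) ℂ) = 0 := by
    rw [two_smul]; nth_rewrite 2 [hc]; simp
  exact A_ne_zero A ((smul_eq_zero.mp h2A).resolve_left (by norm_num))

end SqrtAux

open SqrtAux

/-- Every nontrivial element `A` of `SL(2,ℂ)` has at least one and at most two square
roots up to sign (i.e. its image `Λ A` in the restricted Lorentz group has at least one
and at most two square roots there); moreover, if `μ = Λ A` satisfies `μ² = 1` with
`μ ≠ 1`, then `μ` has exactly two square roots `ν₊, ν₋` in the restricted Lorentz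
group, and `ν₊ν₋ = 1`. -/
theorem square_roots_in_L1 :
    (∀ A : SL2C, Λ A ≠ 1 →
      (∃ ν : L1, ν ^ 2 = Λ A) ∧
      (∀ ν₁ ν₂ ν₃ : L1, ν₁ ^ 2 = Λ A → ν₂ ^ 2 = Λ A → ν₃ ^ 2 = Λ A →
        ν₁ = ν₂ ∨ ν₁ = ν₃ ∨ ν₂ = ν₃)) ∧
    (∀ A : SL2C, Λ A ≠ 1 → (Λ A) ^ 2 = 1 →
      ∃ νp νm : L1, νp ^ 2 = Λ A ∧ νm ^ 2 = Λ A ∧ νp ≠ νm ∧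
        (∀ ν : L1, ν ^ 2 = Λ A → ν = νp ∨ ν = νm) ∧ νp * νm = 1) := by
  constructor
  · intro A hA
    have hA1 : A ≠ 1 := fun h => hA (by rw [h, _root_.map_one])
    have hAm1 : A ≠ -1 := fun h => hA (by rw [h, lam_neg, _root_.map_one])
    have hmA1 : -A ≠ -1 := fun h => hA1 (by simpa using congrArg Neg.neg h)
    constructor
    · by_cases htr : (A : Matrix (Fin 2) (Fin 2) ℂ).trace = -2
      · have htr' : ((-A : SL2C) : Matrix (Fin 2) (Fin 2) ℂ).trace ≠ -2 := by
          rw [Matrix.SpecialLinearGroup.coe_neg, Matrix.trace_neg, htr]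
          norm_num
        obtain ⟨N, hN⟩ := exists_sqrt (-A) htr'
        exact ⟨Λ N, by rw [← map_pow, hN, lam_neg]⟩
      · obtain ⟨N, hN⟩ := exists_sqrt A htr
        exact ⟨Λ N, by rw [← map_pow, hN]⟩
    · intro ν₁ ν₂ ν₃ h1 h2 h3
      rcases root_classify A ν₁ h1 with ⟨N1, e1, q1⟩ | ⟨N1, e1, q1⟩ <;>
        rcases root_classify A ν₂ h2 with ⟨N2, e2, q2⟩ | ⟨N2, e2, q2⟩ <;>
        rcases root_classify A ν₃ h3 with ⟨N3, e3, q3⟩ | ⟨N3, e3, q3⟩ <;>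
        first
          | (left; rw [← e1, ← e2]; exact root_lam_unique _ hAm1 _ _ q1 q2)
          | (left; rw [← e1, ← e2]; exact root_lam_unique _ hmA1 _ _ q1 q2)
          | (right; left; rw [← e1, ← e3]; exact root_lam_unique _ hAm1 _ _ q1 q3)
          | (right; left; rw [← e1, ← e3]; exact root_lam_unique _ hmA1 _ _ q1 q3)
          | (right; right; rw [← e2, ← e3]; exact root_lam_unique _ hAm1 _ _ q2 q3)
          | (right; right; rw [← e2, ← e3]; exact root_lam_unique _ hmA1 _ _ q2 q3)
  · intro A hA h2
    have hA1 : A ≠ 1 := fun h => hA (by rw [h, _root_.map_one])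
    have hAm1 : A ≠ -1 := fun h => hA (by rw [h, lam_neg, _root_.map_one])
    have hmA1 : -A ≠ -1 := fun h => hA1 (by simpa using congrArg Neg.neg h)
    -- A ^ 2 = -1
    have hsqA : A ^ 2 = -1 := by
      have h1 : Λ (A ^ 2) = 1 := by rw [map_pow]; exact h2
      rcases (lam_eq_one_iff _).mp h1 with hs | hs
      · exfalso
        have hch := sl_ch A
        have hAA : (A : Matrix (Fin 2) (Fin 2) ℂ) * A = 1 := by
          rw [← Matrix.SpecialLinearGroup.coe_mul, ← pow_two, hs,
            Matrix.SpecialLinearGroup.coe_one]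
        rw [hch] at hAA
        have key : (A : Matrix (Fin 2) (Fin 2) ℂ).trace • (A : Matrix (Fin 2) (Fin 2) ℂ)
            = (2 : ℂ) • 1 := by
          have := sub_eq_iff_eq_add.mp hAA
          rw [this]; module
        set c := (A : Matrix (Fin 2) (Fin 2) ℂ).trace with hc
        by_cases hc0 : c = 0
        · rw [hc0, zero_smul] at key
          have h00 := congrArg (fun M => M 0 0) key
          simp [Matrix.one_apply] at h00
        · have hAform : (A : Matrix (Fin 2) (Fin 2) ℂ) = (c⁻¹ * 2) • 1 := by
            calc (A : Matrix (Fin 2) (Fin 2) ℂ)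
                = c⁻¹ • (c • (A : Matrix (Fin 2) (Fin 2) ℂ)) := by
                  rw [smul_smul, inv_mul_cancel₀ hc0, one_smul]
              _ = c⁻¹ • ((2:ℂ) • (1 : Matrix (Fin 2) (Fin 2) ℂ)) := by rw [key]
              _ = (c⁻¹ * 2) • 1 := by rw [smul_smul]
          have hdet := A.det_coe
          rw [hAform, Matrix.det_smul, Matrix.det_one, Fintype.card_fin] at hdet
          have hcc : (c⁻¹ * 2) * (c⁻¹ * 2) = 1 := by
            rw [← sq]; simpa using hdet
          rcases mul_self_eq_one_iff.mp hcc with hone | hone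
          · exact hA1 (Subtype.ext (by
              rw [hAform, hone, one_smul, Matrix.SpecialLinearGroup.coe_one]))
          · exact hAm1 (Subtype.ext (by
              rw [hAform, hone, Matrix.SpecialLinearGroup.coe_neg,
                Matrix.SpecialLinearGroup.coe_one, neg_smul, one_smul]))
      · exact hs
    have hAA : (A : Matrix (Fin 2) (Fin 2) ℂ) * A = -1 := by
      rw [← Matrix.SpecialLinearGroup.coe_mul, ← pow_two, hsqA,
        Matrix.SpecialLinearGroup.coe_neg, Matrix.SpecialLinearGroup.coe_one]
    have htr0 : (A : Matrix (Fin 2) (Fin 2) ℂ).trace = 0 := by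
      have hch := sl_ch A
      rw [hch] at hAA
      have key : (A : Matrix (Fin 2) (Fin 2) ℂ).trace • (A : Matrix (Fin 2) (Fin 2) ℂ) = 0 := by
        have := sub_eq_iff_eq_add.mp hAA
        rw [this]; module
      rcases smul_eq_zero.mp key with h | h
      · exact h
      · exact absurd h (A_ne_zero A)
    have hAA' : (A : Matrix (Fin 2) (Fin 2) ℂ) * A = -1 := by
      rw [← Matrix.SpecialLinearGroup.coe_mul, ← pow_two, hsqA,
        Matrix.SpecialLinearGroup.coe_neg, Matrix.SpecialLinearGroup.coe_one]
    have htrp : (A : Matrix (Fin 2) (Fin 2) ℂ).trace ≠ -2 := by rw [htr0]; norm_num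
    have htrm0 : ((-A : SL2C) : Matrix (Fin 2) (Fin 2) ℂ).trace = 0 := by
      rw [Matrix.SpecialLinearGroup.coe_neg, Matrix.trace_neg, htr0, neg_zero]
    have htrm : ((-A : SL2C) : Matrix (Fin 2) (Fin 2) ℂ).trace ≠ -2 := by
      rw [htrm0]; norm_num
    obtain ⟨Np, hNp⟩ := exists_sqrt A htrp
    obtain ⟨Nm, hNm⟩ := exists_sqrt (-A) htrm
    refine ⟨Λ Np, Λ Nm, by rw [← map_pow, hNp], by rw [← map_pow, hNm, lam_neg], ?_, ?_, ?_⟩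
    · -- νp ≠ νm
      intro hpm
      rcases (lam_eq_iff Np Nm).mp hpm with he | he
      · have hANm : A = Nm ^ 2 := by rw [← hNp, he]
        exact ne_neg_self A (hANm.trans hNm)
      · have hANm : A = Nm ^ 2 := by rw [← hNp, he, neg_sq]
        exact ne_neg_self A (hANm.trans hNm)
    · -- classification
      intro ν hν
      rcases root_classify A ν hν with ⟨N, e, q⟩ | ⟨N, e, q⟩
      · left; rw [← e]; exact root_lam_unique A hAm1 N Np q hNp
      · right; rw [← e]; exact root_lam_unique (-A) hmA1 N Nm q hNm
    · -- product
      rw [← _root_.map_mul]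
      apply (lam_eq_one_iff _).mpr
      obtain ⟨tp, htp, htpne, rp⟩ := sqrt_repr A Np htrp hNp
      obtain ⟨tm, htm, htmne, rm⟩ := sqrt_repr (-A) Nm htrm hNm
      rw [htr0] at htp
      rw [htrm0] at htm
      rw [Matrix.SpecialLinearGroup.coe_neg] at rm
      have hprod : ((A : Matrix (Fin 2) (Fin 2) ℂ) + 1) * (-(A : Matrix (Fin 2) (Fin 2) ℂ) + 1)
          = (2 : ℂ) • (1 : Matrix (Fin 2) (Fin 2) ℂ) := by
        have expand : ((A : Matrix (Fin 2) (Fin 2) ℂ) + 1) * (-(A : Matrix (Fin 2) (Fin 2) ℂ) + 1)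
            = -((A : Matrix (Fin 2) (Fin 2) ℂ) * A) + 1 := by noncomm_ring
        rw [expand, hAA']
        module
      have hcoe : ((Np * Nm : SL2C) : Matrix (Fin 2) (Fin 2) ℂ)
          = (tp⁻¹ * tm⁻¹ * 2) • (1 : Matrix (Fin 2) (Fin 2) ℂ) := by
        rw [Matrix.SpecialLinearGroup.coe_mul, rp, rm, smul_mul_smul_comm, hprod, smul_smul,
          mul_assoc]
      set c : ℂ := tp⁻¹ * tm⁻¹ * 2 with hcdef
      have hc1 : c * c = 1 := by
        have : tp ^ 2 * tm ^ 2 = 4 := by rw [htp, htm]; norm_num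
        rw [hcdef]
        field_simp
        linear_combination -this
      rcases mul_self_eq_one_iff.mp hc1 with hone | hone
      · left; apply Subtype.ext
        rw [hcoe, hone, one_smul, Matrix.SpecialLinearGroup.coe_one]
      · right; apply Subtype.ext
        rw [hcoe, hone, Matrix.SpecialLinearGroup.coe_neg,
          Matrix.SpecialLinearGroup.coe_one, neg_smul, one_smul]

end
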